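/- Let V be a finite-dimensional vector space over a field K of characteristic 0 and let g ⊂ gl(V) be a nilpotent Lie subalgebra acting on V so that there is a flag 0 = V₀ ⊂ V₁ ⊂ ... ⊂ V_s = V with g·V_i ⊂ V_{i-1}. Let R be a commutative K-algebra, let ∂_R be a locally nilpotent derivation of R, and define a derivation ∂ on the algebra Sym-free module V ⊗ R viewed inside a commutative algebra A ⊗ R (A containing V as a g-stable subspace with g·V_i ⊂ V_{i-1}) by ∂(g ⊗ f) = Σ_α c_α (e_α g) ⊗ (h_α f) + g ⊗ ∂_R(f) for fixed e_α ∈ g, h_α ∈ R, c_α ∈ K. Then for every i, every g ∈ V_i and f ∈ R, there exists k > 0 with ∂^k(g ⊗ f) ∈ V_{i-1} ⊗ R; in particular ∂ is locally nilpotent on V ⊗ R. -/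
import Mathlib


open TensorProduct

/-- Let `A`, `R` be commutative algebras over a field `K` of characteristic
zero, let `δ_α` be finitely many derivations of `A` and let `V : ℕ → Submodule K A` be a
flag `0 = V₀ ⊆ V₁ ⊆ … ⊆ V_s` with `δ_α (V_i) ⊆ V_{i-1}` (the infinitesimal action of a
nilpotent Lie algebra lowering the flag). Let `∂_R` be a locally nilpotent derivation of
`R`, and let `D` be a derivation of `A ⊗ R` with
`∂(g ⊗ f) = Σ_α c_α (δ_α g) ⊗ (h_α f) + g ⊗ ∂_R f`.
Then for every `i`, `g ∈ V_{i+1}` and `f ∈ R` some power of `D` sends `g ⊗ f` into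
`V_i ⊗ R`; in particular `D` is locally nilpotent on `V_s ⊗ R`. -/
theorem flag_lowering_derivation_locally_nilpotent
    {K : Type*} [Field K] [CharZero K]
    {A R : Type*} [CommRing A] [Algebra K A] [CommRing R] [Algebra K R]
    {m s : ℕ} (δ : Fin m → Derivation K A A) (V : ℕ → Submodule K A)
    (hV0 : V 0 = ⊥) (hVmono : Monotone V)
    (hVfin : ∀ i, FiniteDimensional K (V i))
    (hlow : ∀ (α : Fin m) (i : ℕ), Submodule.map (δ α).toLinearMap (V (i + 1)) ≤ V i)
    (dR : Derivation K R R)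
    (hdR : ∀ f : R, ∃ n : ℕ, (dR.toLinearMap ^ n) f = 0)
    (c : Fin m → K) (h : Fin m → R)
    (DT : Derivation K (A ⊗[K] R) (A ⊗[K] R))
    (hDT : ∀ (g : A) (f : R),
      DT (g ⊗ₜ[K] f) = (∑ α, c α • ((δ α g) ⊗ₜ[K] (h α * f))) + g ⊗ₜ[K] (dR f)) :
    (∀ (i : ℕ) (g : A), g ∈ V (i + 1) → ∀ f : R, ∃ k : ℕ, 0 < k ∧
      (DT.toLinearMap ^ k) (g ⊗ₜ[K] f) ∈
        Submodule.span K {x : A ⊗[K] R | ∃ a ∈ V i, ∃ r : R, x = a ⊗ₜ[K] r}) ∧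
    (∀ (g : A), g ∈ V s → ∀ f : R, ∃ n : ℕ, (DT.toLinearMap ^ n) (g ⊗ₜ[K] f) = 0) := by

  classical
  set W : ℕ → Submodule K (A ⊗[K] R) := fun i =>
    Submodule.span K {x : A ⊗[K] R | ∃ a ∈ V i, ∃ r : R, x = a ⊗ₜ[K] r} with hWdef
  have hmem : ∀ (i : ℕ) (a : A), a ∈ V i → ∀ r : R, a ⊗ₜ[K] r ∈ W i := by
    intro i a ha r
    exact Submodule.subset_span ⟨a, ha, r, rfl⟩
  have hdelta : ∀ (α : Fin m) (i : ℕ) (a : A), a ∈ V i → δ α a ∈ V i := by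
    intro α i a ha
    cases i with
    | zero =>
      rw [hV0] at ha
      rw [Submodule.mem_bot] at ha
      subst ha
      simp
    | succ j => exact hVmono (Nat.le_succ j) (hlow α j ⟨a, ha, rfl⟩)
  have hDW : ∀ (i : ℕ), ∀ x ∈ W i, DT x ∈ W i := by
    intro i x hx
    induction hx using Submodule.span_induction with
    | mem x hx =>
      obtain ⟨a, ha, r, rfl⟩ := hx
      rw [hDT]
      refine Submodule.add_mem _ (Submodule.sum_mem _ fun α _ =>
        Submodule.smul_mem _ _ ?_) (hmem i a ha _)
      exact hmem i _ (hdelta α i a ha) _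
    | zero => simpa using (W i).zero_mem
    | add x y _ _ hx hy =>
      rw [map_add]
      exact Submodule.add_mem _ hx hy
    | smul t x _ hx =>
      rw [Derivation.map_smul]
      exact Submodule.smul_mem _ _ hx
  have hcoe : ∀ x : A ⊗[K] R, DT.toLinearMap x = DT x := fun _ => rfl
  have main : ∀ (i : ℕ) (g : A), g ∈ V (i + 1) → ∀ (f : R) (k : ℕ),
      (DT.toLinearMap ^ k) (g ⊗ₜ[K] f) - g ⊗ₜ[K] ((dR.toLinearMap ^ k) f) ∈ W i := by
    intro i g hg f k
    induction k with
    | zero => simp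
    | succ k ih =>
      have h1 : (DT.toLinearMap ^ (k + 1)) (g ⊗ₜ[K] f)
          = DT ((DT.toLinearMap ^ k) (g ⊗ₜ[K] f)) := by
        rw [pow_succ']; rfl
      have h2 : (dR.toLinearMap ^ (k + 1)) f = dR ((dR.toLinearMap ^ k) f) := by
        rw [pow_succ']; rfl
      set u := (DT.toLinearMap ^ k) (g ⊗ₜ[K] f) with hu
      set v := (dR.toLinearMap ^ k) f with hv
      have key : (DT.toLinearMap ^ (k + 1)) (g ⊗ₜ[K] f) - g ⊗ₜ[K] ((dR.toLinearMap ^ (k + 1)) f)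
          = DT (u - g ⊗ₜ[K] v) + ∑ α, c α • ((δ α g) ⊗ₜ[K] (h α * v)) := by
        rw [h1, h2, map_sub, hDT g v]
        ring
      rw [key]
      refine Submodule.add_mem _ (hDW i _ ih) (Submodule.sum_mem _ fun α _ =>
        Submodule.smul_mem _ _ ?_)
      exact hmem i _ (hlow α i ⟨g, hg, rfl⟩) _
  have hle : ∀ (n N : ℕ) (x : A ⊗[K] R), n ≤ N → (DT.toLinearMap ^ n) x = 0 →
      (DT.toLinearMap ^ N) x = 0 := by
    intro n N x hnN h0
    obtain ⟨d, rfl⟩ := Nat.exists_eq_add_of_le hnN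
    rw [add_comm, pow_add, Module.End.mul_apply, h0, map_zero]
  have nil : ∀ (i : ℕ), ∀ x ∈ W i, ∃ n : ℕ, (DT.toLinearMap ^ n) x = 0 := by
    intro i
    induction i with
    | zero =>
      intro x hx
      have : W 0 ≤ ⊥ := by
        rw [hWdef]
        apply Submodule.span_le.mpr
        rintro x ⟨a, ha, r, rfl⟩
        rw [hV0, Submodule.mem_bot] at ha
        subst ha
        simp
      refine ⟨0, ?_⟩
      have := this hx
      rw [Submodule.mem_bot] at this
      simpa using this
    | succ i ih =>
      intro x hx
      induction hx using Submodule.span_induction with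
      | mem x hx =>
        obtain ⟨g, hg, f, rfl⟩ := hx
        obtain ⟨n, hn⟩ := hdR f
        have h2 : (dR.toLinearMap ^ (n + 1)) f = 0 := by
          rw [pow_succ', Module.End.mul_apply, hn]
          simp
        have hmem' : (DT.toLinearMap ^ (n + 1)) (g ⊗ₜ[K] f) ∈ W i := by
          have := main i g hg f (n + 1)
          rw [h2] at this
          simpa using this
        obtain ⟨N, hN⟩ := ih _ hmem'
        refine ⟨N + (n + 1), ?_⟩
        rw [pow_add, Module.End.mul_apply, hN]
      | zero => exact ⟨0, by simp⟩
      | add x y _ _ hx hy =>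
        obtain ⟨n1, h1⟩ := hx
        obtain ⟨n2, h2⟩ := hy
        refine ⟨max n1 n2, ?_⟩
        rw [map_add, hle n1 _ x (le_max_left _ _) h1, hle n2 _ y (le_max_right _ _) h2,
          add_zero]
      | smul t x _ hx =>
        obtain ⟨n1, h1⟩ := hx
        exact ⟨n1, by rw [map_smul, h1, smul_zero]⟩
  constructor
  · intro i g hg f
    obtain ⟨n, hn⟩ := hdR f
    have h2 : (dR.toLinearMap ^ (n + 1)) f = 0 := by
      rw [pow_succ', Module.End.mul_apply, hn]
      simp
    refine ⟨n + 1, Nat.succ_pos n, ?_⟩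
    have := main i g hg f (n + 1)
    rw [h2] at this
    simpa using this
  · intro g hg f
    exact nil s _ (hmem s g hg f)
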